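/- Let A be a self-adjoint operator on a finite-dimensional complex inner product space, E ∈ ℝ, and 0 < ε < η. Assume that the spectral subspace of A for the interval (E - η, E + η) has dimension at most one. If there exists a unit vector φ with ‖(A - E)φ‖ < ε, then there exist an eigenvalue E₀ of A with |E₀ - E| < ε and a corresponding unit eigenvector ψ₀ such that ‖φ - ψ₀‖ ≤ C ε η⁻¹ for some absolute constant C (one can take C = 2). -/

import Mathlib

set_option maxHeartbeats 1000000 in
/-- If the spectral subspace of a self-adjoint operator `A` for the interval
`(E - η, E + η)` has dimension at most one, and a unit vector `φ` satisfies
`‖(A - E)φ‖ < ε` with `0 < ε < η`, then there is an eigenvalue `E₀` of `A` with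
`|E₀ - E| < ε` and a unit eigenvector `ψ₀` with `‖φ - ψ₀‖ ≤ 2 ε η⁻¹`. -/
theorem approx_eigenvector_implies_close_eigenvector
    {V : Type*} [NormedAddCommGroup V] [InnerProductSpace ℂ V] [FiniteDimensional ℂ V]
    (A : V →ₗ[ℂ] V) (hA : A.IsSymmetric) (E ε η : ℝ) (hε : 0 < ε) (hεη : ε < η)
    (hdim : Module.finrank ℂ
      ↥(⨆ μ ∈ Set.Ioo (E - η) (E + η), Module.End.eigenspace A (μ : ℂ)) ≤ 1)
    (φ : V) (hφ : ‖φ‖ = 1) (h : ‖A φ - (E : ℂ) • φ‖ < ε) :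
    ∃ (E₀ : ℝ) (ψ₀ : V), Module.End.HasEigenvector A (E₀ : ℂ) ψ₀ ∧ ‖ψ₀‖ = 1 ∧
      |E₀ - E| < ε ∧ ‖φ - ψ₀‖ ≤ 2 * ε * η⁻¹ := by
  classical
  have hη : 0 < η := hε.trans hεη
  set n := Module.finrank ℂ V with hn
  set b := hA.eigenvectorBasis rfl with hb
  set μ := hA.eigenvalues (rfl : Module.finrank ℂ V = n) with hμ
  set c : Fin n → ℂ := fun i => b.repr φ i with hc
  -- Parseval
  have par : ∀ x : V, ‖x‖ ^ 2 = ∑ i, ‖b.repr x i‖ ^ 2 := by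
    intro x
    rw [← b.repr.norm_map, EuclideanSpace.norm_eq,
      Real.sq_sqrt (Finset.sum_nonneg fun i _ => sq_nonneg _)]
  have hsum1 : ∑ i, ‖c i‖ ^ 2 = 1 := by
    have := par φ; rw [hφ] at this; simpa using this.symm
  -- key spectral estimate
  have hkey : ∑ i, (μ i - E) ^ 2 * ‖c i‖ ^ 2 < ε ^ 2 := by
    have hrepr : ∀ i, b.repr (A φ - (E:ℂ) • φ) i = ((μ i - E : ℝ) : ℂ) * c i := by
      intro i
      have hAφ : b.repr (A φ) i = (μ i : ℂ) * c i :=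
        hA.eigenvectorBasis_apply_self_apply rfl φ i
      simp only [map_sub, map_smul]
      show (b.repr (A φ) - (E:ℂ) • b.repr φ) i = _
      simp only [PiLp.sub_apply, PiLp.smul_apply, smul_eq_mul, hAφ]
      push_cast
      ring
    have hnorm : ‖A φ - (E:ℂ) • φ‖ ^ 2 = ∑ i, (μ i - E) ^ 2 * ‖c i‖ ^ 2 := by
      rw [par]
      congr 1; funext i
      rw [hrepr i, norm_mul, mul_pow]
      congr 1
      rw [Complex.norm_real, Real.norm_eq_abs, sq_abs]
    nlinarith [norm_nonneg (A φ - (E:ℂ) • φ)]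
  -- the set of "near" indices
  set S : Finset (Fin n) := Finset.univ.filter (fun i => |μ i - E| < η) with hS
  have hfar : ∀ i ∉ S, η ^ 2 ≤ (μ i - E) ^ 2 := by
    intro i hi
    rw [hS, Finset.mem_filter] at hi
    push_neg at hi
    have := hi (Finset.mem_univ i)
    nlinarith [abs_nonneg (μ i - E), sq_abs (μ i - E)]
  -- S has at most one element
  have hcard : S.card ≤ 1 := by
    set W := ⨆ μ ∈ Set.Ioo (E - η) (E + η), Module.End.eigenspace A (μ : ℂ) with hW
    have hmemW : ∀ i ∈ S, b i ∈ W := by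
      intro i hi
      rw [hS, Finset.mem_filter] at hi
      have hIoo : μ i ∈ Set.Ioo (E - η) (E + η) := by
        rcases abs_lt.mp hi.2 with ⟨h1, h2⟩
        exact ⟨by linarith, by linarith⟩
      exact le_biSup (fun μ : ℝ => Module.End.eigenspace A (μ : ℂ)) hIoo
        (hA.hasEigenvector_eigenvectorBasis rfl i).1
    have hli : LinearIndependent ℂ (fun i : S => (⟨b i, hmemW i i.2⟩ : W)) := by
      apply LinearIndependent.of_comp W.subtype
      exact b.orthonormal.linearIndependent.comp _ Subtype.val_injective
    have := hli.fintype_card_le_finrank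
    simpa [Fintype.card_coe] using this.trans hdim
  -- S is nonempty
  have hSne : S.Nonempty := by
    by_contra hne
    rw [Finset.not_nonempty_iff_eq_empty] at hne
    have hge : η ^ 2 ≤ ∑ i, (μ i - E) ^ 2 * ‖c i‖ ^ 2 := by
      calc η ^ 2 = ∑ i, η ^ 2 * ‖c i‖ ^ 2 := by rw [← Finset.mul_sum, hsum1, mul_one]
        _ ≤ _ := Finset.sum_le_sum fun i _ =>
            mul_le_mul_of_nonneg_right (hfar i (by simp [hne])) (sq_nonneg _)
    nlinarith
  obtain ⟨i₀, hSi₀⟩ := Finset.card_eq_one.mp (le_antisymm hcard hSne.card_pos)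
  -- split the sums at i₀
  set t := ‖c i₀‖ ^ 2 with ht
  have htnn : 0 ≤ t := sq_nonneg _
  have hrest : ∑ i ∈ Finset.univ.erase i₀, ‖c i‖ ^ 2 = 1 - t := by
    have := Finset.add_sum_erase Finset.univ (fun i => ‖c i‖ ^ 2) (Finset.mem_univ i₀)
    rw [hsum1] at this; linarith
  have ht1 : t ≤ 1 := by
    have h0 : 0 ≤ ∑ i ∈ Finset.univ.erase i₀, ‖c i‖ ^ 2 :=
      Finset.sum_nonneg fun i _ => sq_nonneg _
    linarith
  have hmain : (μ i₀ - E) ^ 2 * t + η ^ 2 * (1 - t) < ε ^ 2 := by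
    have hsplit := Finset.add_sum_erase Finset.univ
      (fun i => (μ i - E) ^ 2 * ‖c i‖ ^ 2) (Finset.mem_univ i₀)
    have hbd : η ^ 2 * (1 - t) ≤ ∑ i ∈ Finset.univ.erase i₀, (μ i - E) ^ 2 * ‖c i‖ ^ 2 := by
      rw [← hrest, Finset.mul_sum]
      refine Finset.sum_le_sum fun i hi => ?_
      refine mul_le_mul_of_nonneg_right (hfar i ?_) (sq_nonneg _)
      rw [hSi₀]
      simpa using (Finset.mem_erase.mp hi).1
    calc (μ i₀ - E) ^ 2 * t + η ^ 2 * (1 - t)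
        ≤ ∑ i, (μ i - E) ^ 2 * ‖c i‖ ^ 2 := by
          rw [← hsplit]; simp only [← ht]; linarith
      _ < ε ^ 2 := hkey
  -- the eigenvalue estimate
  have hEclose : |μ i₀ - E| < ε := by
    by_contra hcon
    push_neg at hcon
    have h1 : ε ^ 2 ≤ (μ i₀ - E) ^ 2 := by nlinarith [sq_abs (μ i₀ - E), abs_nonneg (μ i₀ - E)]
    have h2 : ε ^ 2 ≤ η ^ 2 := by nlinarith
    nlinarith [mul_le_mul_of_nonneg_right h1 htnn,
      mul_le_mul_of_nonneg_right h2 (by linarith : (0:ℝ) ≤ 1 - t)]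
  -- t is close to 1
  have htclose : η ^ 2 * (1 - t) ≤ ε ^ 2 := by nlinarith [sq_nonneg (μ i₀ - E)]
  have htpos : 0 < t := by nlinarith
  set s := ‖c i₀‖ with hs
  have hsnn : 0 ≤ s := hs ▸ norm_nonneg _
  have hst : t = s ^ 2 := ht
  have hspos : 0 < s := by nlinarith
  have hs1 : s ≤ 1 := by nlinarith
  have hz : (s⁻¹ : ℂ) * c i₀ ≠ 0 := by
    apply mul_ne_zero
    · simpa using hspos.ne'
    · simpa [hs] using hspos.ne'
  set ψ₀ : V := ((s⁻¹ : ℂ) * c i₀) • b i₀ with hψ₀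
  have hev := hA.hasEigenvector_eigenvectorBasis rfl i₀
  have hznorm : ‖(s⁻¹ : ℂ) * c i₀‖ = 1 := by
    rw [norm_mul, norm_inv, Complex.norm_real, Real.norm_eq_abs,
      abs_of_nonneg hsnn, ← hs, inv_mul_cancel₀ hspos.ne']
  refine ⟨μ i₀, ψ₀, ⟨Submodule.smul_mem _ _ hev.1, smul_ne_zero hz hev.2⟩, ?_, hEclose, ?_⟩
  · rw [hψ₀, norm_smul, hznorm, one_mul, b.orthonormal.1 i₀]
  · -- distance estimate
    have hreprψ : ∀ i, b.repr ψ₀ i = ((s⁻¹ : ℂ) * c i₀) * (if i = i₀ then 1 else 0) := by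
      intro i
      rw [hψ₀, map_smul, b.repr_self]
      show ((s⁻¹ : ℂ) * c i₀) • ((EuclideanSpace.single i₀ (1:ℂ)) i) = _
      rw [smul_eq_mul, EuclideanSpace.single_apply]
    have hdist2 : ‖φ - ψ₀‖ ^ 2 = (1 - s) ^ 2 + (1 - t) := by
      rw [par]
      rw [← Finset.add_sum_erase Finset.univ _ (Finset.mem_univ i₀)]
      have h1 : ‖b.repr (φ - ψ₀) i₀‖ ^ 2 = (1 - s) ^ 2 := by
        rw [map_sub]
        show ‖b.repr φ i₀ - b.repr ψ₀ i₀‖ ^ 2 = _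
        rw [hreprψ]
        simp only [eq_self_iff_true, if_true, mul_one]
        have : (c i₀ : ℂ) - (s⁻¹ : ℂ) * c i₀ = ((1 - s⁻¹ : ℝ) : ℂ) * c i₀ := by
          push_cast; ring
        have h1s : (1:ℝ) ≤ s⁻¹ := by
          nlinarith [mul_inv_cancel₀ hspos.ne', mul_pos hspos (inv_pos.mpr hspos)]
        rw [show b.repr φ i₀ = c i₀ from rfl, this, norm_mul, Complex.norm_real,
          Real.norm_eq_abs, ← hs, abs_of_nonpos (by linarith : 1 - s⁻¹ ≤ 0)]
        have hms : -(1 - s⁻¹) * s = 1 - s := by field_simp; ring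
        rw [hms]
      have h2 : ∑ i ∈ Finset.univ.erase i₀, ‖b.repr (φ - ψ₀) i‖ ^ 2 = 1 - t := by
        rw [← hrest]
        refine Finset.sum_congr rfl fun i hi => ?_
        rw [map_sub]
        show ‖b.repr φ i - b.repr ψ₀ i‖ ^ 2 = _
        rw [hreprψ, if_neg (Finset.mem_erase.mp hi).1, mul_zero, sub_zero]
      rw [h1, h2]
    have hfinal2 : ‖φ - ψ₀‖ ^ 2 ≤ (2 * ε * η⁻¹) ^ 2 := by
      rw [hdist2]
      have h2t : (1 - s) ^ 2 + (1 - t) ≤ 2 * (1 - t) := by nlinarith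
      have hη2 : (0:ℝ) < η ^ 2 := by positivity
      have hinv : 1 - t ≤ ε ^ 2 * (η ^ 2)⁻¹ := by
        nlinarith [mul_le_mul_of_nonneg_right htclose (le_of_lt (inv_pos.mpr hη2)),
          mul_inv_cancel₀ hη2.ne']
      have heq : (2 * ε * η⁻¹) ^ 2 = 4 * (ε ^ 2 * (η ^ 2)⁻¹) := by
        field_simp; ring
      have hnn : 0 ≤ ε ^ 2 * (η ^ 2)⁻¹ := by positivity
      rw [heq]
      linarith
    calc ‖φ - ψ₀‖ = Real.sqrt (‖φ - ψ₀‖ ^ 2) := (Real.sqrt_sq (norm_nonneg _)).symm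
      _ ≤ Real.sqrt ((2 * ε * η⁻¹) ^ 2) := Real.sqrt_le_sqrt hfinal2
      _ = 2 * ε * η⁻¹ := Real.sqrt_sq (by positivity)
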